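/- Let G be a connected graph on n vertices with principal eigenvector x normalized so that ∑_{i=1}^n x_i² = 1, let ρ be the spectral radius of the adjacency matrix of G, let d_i denote the degree of vertex i, and let ρ_i be the spectral radius of the adjacency matrix of the subgraph G_(i) obtained by deleting vertex i. Then for every vertex i, x_i ≥ 1/√(1 + d_i/(ρ - ρ_i)²). -/

import Mathlib

open Matrix

/-- The spectral radius of a real square matrix: the supremum of the absolute values of
its (real) eigenvalues. -/
noncomputable def specRad {V : Type*} [Fintype V] [DecidableEq V] (A : Matrix V V ℝ) : ℝ :=
  sSup {r : ℝ | ∃ μ : ℝ, Module.End.HasEigenvalue (Matrix.toLin' A) μ ∧ r = |μ|}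

variable {m : Type*} [Fintype m] [DecidableEq m]

lemma hasEigenvalue_toLin'_iff (A : Matrix m m ℝ) (μ : ℝ) :
    Module.End.HasEigenvalue (Matrix.toLin' A) μ ↔ μ ∈ spectrum ℝ A := by
  rw [Module.End.hasEigenvalue_iff_mem_spectrum]
  have h : Matrix.toLin' A = Matrix.toLinAlgEquiv' A := by
    rfl
  rw [h, AlgEquiv.spectrum_eq Matrix.toLinAlgEquiv' A]

lemma specRad_set_eq {A : Matrix m m ℝ} (hA : A.IsHermitian) :
    {r : ℝ | ∃ μ : ℝ, Module.End.HasEigenvalue (Matrix.toLin' A) μ ∧ r = |μ|}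
      = Set.range (fun j => |hA.eigenvalues j|) := by
  ext r
  simp only [Set.mem_setOf_eq, hasEigenvalue_toLin'_iff, hA.spectrum_real_eq_range_eigenvalues,
    Set.mem_range]
  constructor
  · rintro ⟨μ, ⟨j, rfl⟩, rfl⟩; exact ⟨j, rfl⟩
  · rintro ⟨j, rfl⟩; exact ⟨hA.eigenvalues j, ⟨j, rfl⟩, rfl⟩

lemma abs_eigenvalue_le_specRad {A : Matrix m m ℝ} (hA : A.IsHermitian) (j : m) :
    |hA.eigenvalues j| ≤ specRad A := by
  rw [specRad, specRad_set_eq hA]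
  exact le_csSup ((Set.finite_range _).bddAbove) ⟨j, rfl⟩

lemma exists_specRad_eq {A : Matrix m m ℝ} (hA : A.IsHermitian) [Nonempty m] :
    ∃ j, specRad A = |hA.eigenvalues j| := by
  have h : specRad A ∈ Set.range (fun j => |hA.eigenvalues j|) := by
    rw [specRad, specRad_set_eq hA]
    exact (Set.range_nonempty _).csSup_mem (Set.finite_range _)
  obtain ⟨j, hj⟩ := h
  exact ⟨j, hj.symm⟩

lemma specRad_nonneg {A : Matrix m m ℝ} (hA : A.IsHermitian) [Nonempty m] :
    0 ≤ specRad A := by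
  obtain ⟨j, hj⟩ := exists_specRad_eq hA
  rw [hj]; positivity

lemma rayleigh_le_specRad {A : Matrix m m ℝ} (hA : A.IsHermitian) [Nonempty m] (y : m → ℝ) :
    y ⬝ᵥ (A *ᵥ y) ≤ specRad A * (y ⬝ᵥ y) := by
  set U : Matrix m m ℝ := (hA.eigenvectorUnitary : Matrix m m ℝ) with hU
  set z : m → ℝ := star U *ᵥ y with hz
  set d : m → ℝ := fun j => hA.eigenvalues j with hd
  have hUs : U * star U = 1 := mem_unitaryGroup_iff.mp hA.eigenvectorUnitary.2
  have hswap : ∀ v : m → ℝ, y ⬝ᵥ (U *ᵥ v) = z ⬝ᵥ v := by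
    intro v
    rw [dotProduct_mulVec, hz]
    congr 1
    rw [star_eq_conjTranspose, conjTranspose_eq_transpose_of_trivial, mulVec_transpose]
  have hzz : z ⬝ᵥ z = y ⬝ᵥ y := by
    have h2 := hswap z
    rw [hz, mulVec_mulVec, hUs, one_mulVec] at h2
    exact h2.symm
  have hdiag : Matrix.diagonal (RCLike.ofReal ∘ hA.eigenvalues) = Matrix.diagonal d := by
    congr 1
  have key : y ⬝ᵥ (A *ᵥ y) = z ⬝ᵥ (Matrix.diagonal d *ᵥ z) := by
    conv_lhs => rw [hA.spectral_theorem, Unitary.conjStarAlgAut_apply]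
    rw [hdiag, ← mulVec_mulVec, ← mulVec_mulVec, hswap]
  rw [key, ← hzz]
  unfold dotProduct
  rw [Finset.mul_sum]
  apply Finset.sum_le_sum
  intro j _
  rw [mulVec_diagonal]
  have h1 : d j ≤ specRad A := le_trans (le_abs_self _) (abs_eigenvalue_le_specRad hA j)
  nlinarith [sq_nonneg (z j), sq_nonneg (z j * (specRad A - d j))]

lemma exists_eigenvector_specRad {A : Matrix m m ℝ} (hA : A.IsHermitian) [Nonempty m] :
    ∃ (μ : ℝ) (z : m → ℝ), z ≠ 0 ∧ A *ᵥ z = μ • z ∧ |μ| = specRad A := by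
  obtain ⟨j, hj⟩ := exists_specRad_eq hA
  refine ⟨hA.eigenvalues j, ⇑(hA.eigenvectorBasis j), ?_, hA.mulVec_eigenvectorBasis j, hj.symm⟩
  intro h
  have hb : hA.eigenvectorBasis j = 0 := by
    ext k; exact congrFun h k
  have := hA.eigenvectorBasis.orthonormal.1 j
  rw [hb, norm_zero] at this
  exact one_ne_zero this.symm

section helpers
variable {n : ℕ}

lemma sum_compl_singleton (i : Fin n) (f : Fin n → ℝ) :
    ∑ j : ({i}ᶜ : Set (Fin n)), f j.1 = ∑ j ∈ Finset.univ.erase i, f j := by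
  rw [Finset.sum_subtype (p := fun x => x ∈ ({i}ᶜ : Set (Fin n))) (Finset.univ.erase i) (fun x => by simp) f]

lemma sum_split_singleton (i : Fin n) (f : Fin n → ℝ) :
    ∑ j : Fin n, f j = f i + ∑ j : ({i}ᶜ : Set (Fin n)), f j.1 := by
  rw [sum_compl_singleton, Finset.add_sum_erase _ f (Finset.mem_univ i)]

lemma adjMatrix_isHermitian (G : SimpleGraph (Fin n)) [DecidableRel G.Adj]
    {s : Set (Fin n)} [DecidableRel (G.induce s).Adj] :
    ((G.induce s).adjMatrix ℝ).IsHermitian := by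
  rw [Matrix.IsHermitian, Matrix.conjTranspose_eq_transpose_of_trivial, SimpleGraph.transpose_adjMatrix]

end helpers


set_option maxHeartbeats 1000000 in
/-- **Main theorem.** Let `G` be a connected graph on `n` vertices with principal eigenvector
`x` (normalized so that `∑ x i ^ 2 = 1`) and spectral radius `ρ`, let `d i = G.degree i`, and
for a vertex `i` let `ρᵢ` be the spectral radius of the adjacency matrix of the subgraph `G_(i)`
obtained by deleting the vertex `i`. Then for every vertex `i`,
`x i ≥ 1 / √(1 + d i / (ρ - ρᵢ)²)`. -/
theorem stmt5 {n : ℕ} (G : SimpleGraph (Fin n)) [DecidableRel G.Adj]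
    (hG : G.Connected) (x : Fin n → ℝ) (ρ : ℝ)
    (hρ : ρ = specRad (G.adjMatrix ℝ))
    (hx_pos : ∀ i, 0 < x i)
    (hx_norm : ∑ i, x i ^ 2 = 1)
    (heig : G.adjMatrix ℝ *ᵥ x = ρ • x) :
    ∀ i, x i ≥ 1 / Real.sqrt (1 + (G.degree i : ℝ) /
      (ρ - specRad ((G.induce ({i}ᶜ : Set (Fin n))).adjMatrix ℝ)) ^ 2) := by
  intro i
  set B : Matrix ({i}ᶜ : Set (Fin n)) ({i}ᶜ : Set (Fin n)) ℝ :=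
    (G.induce ({i}ᶜ : Set (Fin n))).adjMatrix ℝ with hB
  set ρi : ℝ := specRad B with hρi
  set A : Matrix (Fin n) (Fin n) ℝ := G.adjMatrix ℝ with hA
  have hBH : B.IsHermitian := adjMatrix_isHermitian G
  have hApply : ∀ v : Fin n → ℝ, ∀ j, (A *ᵥ v) j = ∑ k, A j k * v k := fun v j => rfl
  have hAx : ∀ j, ∑ k, A j k * x k = ρ * x j := by
    intro j
    have := congrFun heig j
    simpa [hApply] using this
  by_cases hne : Nonempty ({i}ᶜ : Set (Fin n))
  swap
  · -- empty case: n = 1 essentially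
    have hall : ∀ j : Fin n, j = i := by
      intro j
      by_contra hj
      exact hne ⟨⟨j, Set.mem_compl_singleton_iff.mpr hj⟩⟩
    have hdeg : G.degree i = 0 := by
      rw [SimpleGraph.degree, Finset.card_eq_zero]
      ext j
      simp only [SimpleGraph.mem_neighborFinset, Finset.notMem_empty, iff_false]
      intro hadj
      exact G.irrefl (hall j ▸ hadj)
    have h1 : x i ^ 2 = 1 := by
      rw [← hx_norm]
      symm
      apply Finset.sum_eq_single
      · intro j _ hji; exact absurd (hall j) hji
      · intro h; exact absurd (Finset.mem_univ i) h
    have h2 : x i = 1 := by nlinarith [hx_pos i]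
    rw [hdeg, h2]
    norm_num
  · -- nonempty case
    have hBA : ∀ j k : ({i}ᶜ : Set (Fin n)), B j k = A j.1 k.1 := by
      intro j k
      simp [hB, hA, SimpleGraph.adjMatrix_apply]
    have hA_nonneg : ∀ j k, 0 ≤ A j k := by
      intro j k; simp [hA, SimpleGraph.adjMatrix_apply]; split <;> norm_num
    have hA_symm : ∀ j k, A j k = A k j := by
      intro j k
      simp only [hA, SimpleGraph.adjMatrix_apply]
      exact if_congr (G.adj_comm j k) rfl rfl
    have hAii : ∀ j, A j j = 0 := by intro j; simp [hA]
    -- Step A : ρi < ρ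
    obtain ⟨μ, z, hz0, hzB, hμ⟩ := exists_eigenvector_specRad hBH
    set w : Fin n → ℝ := fun j =>
      if h : j ∈ ({i}ᶜ : Set (Fin n)) then |z ⟨j, h⟩| else 0 with hw
    have hw_nonneg : ∀ j, 0 ≤ w j := by
      intro j; rw [hw]; dsimp only; split <;> positivity
    have hwi : w i = 0 := by rw [hw]; simp
    have hw_coe : ∀ j : ({i}ᶜ : Set (Fin n)), w j.1 = |z j| := by
      intro j; rw [hw]; dsimp only; rw [dif_pos j.2]
    obtain ⟨k0, hk0⟩ : ∃ k0 : ({i}ᶜ : Set (Fin n)), z k0 ≠ 0 := by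
      by_contra hc
      push_neg at hc
      exact hz0 (funext hc)
    have hwk0 : 0 < w k0.1 := by rw [hw_coe k0]; exact abs_pos.mpr hk0
    have hAw : ∀ j, ρi * w j ≤ (A *ᵥ w) j := by
      intro j
      by_cases hj : j ∈ ({i}ᶜ : Set (Fin n))
      · have hsum : (A *ᵥ w) j = ∑ k : ({i}ᶜ : Set (Fin n)), A j k.1 * w k.1 := by
          rw [hApply, sum_split_singleton i (fun k => A j k * w k), hwi, mul_zero, zero_add]
        have hBz : ρi * w j = |(B *ᵥ z) ⟨j, hj⟩| := by
          rw [hzB]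
          have : w j = |z ⟨j, hj⟩| := hw_coe ⟨j, hj⟩
          rw [this, Pi.smul_apply, smul_eq_mul, abs_mul, hμ]
        rw [hBz, hsum]
        calc |(B *ᵥ z) ⟨j, hj⟩| = |∑ k : ({i}ᶜ : Set (Fin n)), B ⟨j, hj⟩ k * z k| := rfl
          _ ≤ ∑ k : ({i}ᶜ : Set (Fin n)), |B ⟨j, hj⟩ k * z k| := Finset.abs_sum_le_sum_abs _ _
          _ ≤ ∑ k : ({i}ᶜ : Set (Fin n)), A j k.1 * w k.1 := by
              apply Finset.sum_le_sum
              intro k _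
              rw [abs_mul, hw_coe k, hBA]
              have : |A j k.1| = A j k.1 := abs_of_nonneg (hA_nonneg _ _)
              rw [this]
      · have hji : j = i := by
          by_contra hji
          exact hj (Set.mem_compl_singleton_iff.mpr hji)
        rw [hji, hwi, mul_zero, hApply]
        exact Finset.sum_nonneg fun k _ => mul_nonneg (hA_nonneg _ _) (hw_nonneg k)
    have hxw : 0 < ∑ j, x j * w j := by
      apply Finset.sum_pos' (fun j _ => mul_nonneg (hx_pos j).le (hw_nonneg j))
      exact ⟨k0.1, Finset.mem_univ _, mul_pos (hx_pos k0.1) hwk0⟩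
    have hxAw : ∑ j, x j * (A *ᵥ w) j = ρ * ∑ j, x j * w j := by
      have h1 : ∑ j, x j * (A *ᵥ w) j = x ⬝ᵥ (A *ᵥ w) := rfl
      have h2 : x ᵥ* A = ρ • x := by
        rw [hA, ← SimpleGraph.transpose_adjMatrix (α := ℝ) G, Matrix.vecMul_transpose, ← hA, heig]
      rw [h1, Matrix.dotProduct_mulVec, h2]
      rw [smul_dotProduct, smul_eq_mul]
      rfl
    have hρiρ : ρi ≤ ρ := by
      have h1 : ρi * ∑ j, x j * w j ≤ ρ * ∑ j, x j * w j := by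
        rw [← hxAw, Finset.mul_sum]
        apply Finset.sum_le_sum
        intro j _
        calc ρi * (x j * w j) = x j * (ρi * w j) := by ring
          _ ≤ x j * (A *ᵥ w) j := by
              exact mul_le_mul_of_nonneg_left (hAw j) (hx_pos j).le
      exact le_of_mul_le_mul_right h1 hxw
    have hlt : ρi < ρ := by
      rcases lt_or_eq_of_le hρiρ with h | heq
      · exact h
      · exfalso
        have hterm : ∀ j, (A *ᵥ w) j = ρ * w j := by
          have hsum0 : ∑ j, x j * ((A *ᵥ w) j - ρi * w j) = 0 := by
            have e2 : ∑ j, x j * (ρi * w j) = ρi * ∑ j, x j * w j := by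
              rw [Finset.mul_sum]; congr 1; funext j; ring
            simp only [mul_sub]
            rw [Finset.sum_sub_distrib, hxAw, e2, heq]
            ring
          have hz : ∀ j ∈ Finset.univ, x j * ((A *ᵥ w) j - ρi * w j) = 0 := by
            rw [← Finset.sum_eq_zero_iff_of_nonneg]
            · exact hsum0
            · intro j _
              exact mul_nonneg (hx_pos j).le (by linarith [hAw j])
          intro j
          have := hz j (Finset.mem_univ j)
          have h3 : (A *ᵥ w) j - ρi * w j = 0 := by
            rcases mul_eq_zero.mp this with h | h
            · exact absurd h (hx_pos j).ne'
            · exact h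
          rw [heq] at h3
          linarith
        have hprop : ∀ j, w j = 0 → ∀ k, G.Adj j k → w k = 0 := by
          intro j hj k hadj
          have h4 : ∑ k, A j k * w k = 0 := by
            rw [← hApply, hterm j, hj, mul_zero]
          have h5 : ∀ k ∈ Finset.univ, A j k * w k = 0 := by
            rw [← Finset.sum_eq_zero_iff_of_nonneg]
            · exact h4
            · intro k _; exact mul_nonneg (hA_nonneg _ _) (hw_nonneg k)
          have h6 := h5 k (Finset.mem_univ k)
          have h7 : A j k = 1 := by simp [hA, SimpleGraph.adjMatrix_apply, hadj]
          rw [h7, one_mul] at h6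
          exact h6
        have hall0 : ∀ j, w j = 0 := by
          have hwalk : ∀ (u v : Fin n), G.Walk u v → w u = 0 → w v = 0 := by
            intro u v p
            induction p with
            | nil => exact id
            | cons h q ih => exact fun hu => ih (hprop _ hu _ h)
          intro j
          obtain ⟨p⟩ := hG.preconnected i j
          exact hwalk i j p hwi
        exact hwk0.ne' (hall0 k0.1)
    -- Step B : the main inequality
    set y : ({i}ᶜ : Set (Fin n)) → ℝ := fun j => x j.1 with hy
    set Y : ℝ := y ⬝ᵥ y with hYdef
    have hxsq : ∑ j, x j * x j = 1 := by
      have : ∀ j : Fin n, x j ^ 2 = x j * x j := fun j => sq (x j) ▸ by ring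
      rw [← hx_norm]
      exact Finset.sum_congr rfl fun j _ => (by ring)
    have hY : Y = 1 - x i ^ 2 := by
      have h1 : ∑ j : Fin n, x j * x j
          = x i * x i + ∑ j : ({i}ᶜ : Set (Fin n)), x j.1 * x j.1 :=
        sum_split_singleton i (fun j => x j * x j)
      have h2 : Y = ∑ j : ({i}ᶜ : Set (Fin n)), x j.1 * x j.1 := rfl
      rw [h2]
      nlinarith [h1, hxsq]
    have hY0 : 0 ≤ Y := Finset.sum_nonneg fun j _ => mul_self_nonneg _
    set t : ℝ := ∑ j : ({i}ᶜ : Set (Fin n)), A i j.1 * x j.1 with htdef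
    have ht : t = ρ * x i := by
      have h1 : ∑ k : Fin n, A i k * x k
          = A i i * x i + ∑ k : ({i}ᶜ : Set (Fin n)), A i k.1 * x k.1 :=
        sum_split_singleton i (fun k => A i k * x k)
      rw [hAii, zero_mul, zero_add, ← htdef, hAx i] at h1
      exact h1.symm
    have ht0 : 0 ≤ t :=
      Finset.sum_nonneg fun j _ => mul_nonneg (hA_nonneg _ _) (hx_pos _).le
    have hBy : ∀ j : ({i}ᶜ : Set (Fin n)), (B *ᵥ y) j = ρ * x j.1 - A j.1 i * x i := by
      intro j
      have h1 : (B *ᵥ y) j = ∑ k : ({i}ᶜ : Set (Fin n)), A j.1 k.1 * x k.1 :=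
        calc (B *ᵥ y) j = ∑ k : ({i}ᶜ : Set (Fin n)), B j k * y k := rfl
          _ = ∑ k : ({i}ᶜ : Set (Fin n)), A j.1 k.1 * x k.1 :=
            Finset.sum_congr rfl fun k _ => by rw [hBA]
      have h2 : ∑ k : Fin n, A j.1 k * x k
          = A j.1 i * x i + ∑ k : ({i}ᶜ : Set (Fin n)), A j.1 k.1 * x k.1 :=
        sum_split_singleton i (fun k => A j.1 k * x k)
      rw [hAx j.1] at h2
      rw [h1]
      linarith
    have hyBy : y ⬝ᵥ (B *ᵥ y) = ρ * Y - x i * t := by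
      have h1 : y ⬝ᵥ (B *ᵥ y)
          = ∑ j : ({i}ᶜ : Set (Fin n)), x j.1 * (ρ * x j.1 - A j.1 i * x i) :=
        Finset.sum_congr rfl fun j _ => by rw [hBy j]
      rw [h1]
      have h2 : ∀ j : ({i}ᶜ : Set (Fin n)),
          x j.1 * (ρ * x j.1 - A j.1 i * x i)
            = ρ * (x j.1 * x j.1) - x i * (A i j.1 * x j.1) := by
        intro j; rw [hA_symm j.1 i]; ring
      rw [Finset.sum_congr rfl fun j _ => h2 j, Finset.sum_sub_distrib,
        ← Finset.mul_sum, ← Finset.mul_sum]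
      rfl
    have hray : y ⬝ᵥ (B *ᵥ y) ≤ ρi * Y := rayleigh_le_specRad hBH y
    have h3 : (ρ - ρi) * Y ≤ x i * t := by linarith
    have hCS : t ^ 2 ≤ (G.degree i : ℝ) * Y := by
      have hcs := Finset.sum_mul_sq_le_sq_mul_sq Finset.univ
        (fun j : ({i}ᶜ : Set (Fin n)) => A i j.1) (fun j => x j.1)
      have hsq : ∀ k, A i k ^ 2 = A i k := by
        intro k
        simp only [hA, SimpleGraph.adjMatrix_apply]
        split <;> norm_num
      have hdeg : ∑ j : ({i}ᶜ : Set (Fin n)), A i j.1 = (G.degree i : ℝ) := by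
        have h1 : ∑ k : Fin n, A i k
            = A i i + ∑ k : ({i}ᶜ : Set (Fin n)), A i k.1 :=
          sum_split_singleton i (fun k => A i k)
        have h2 : ∑ k : Fin n, A i k = (G.degree i : ℝ) := by
          have hcst := SimpleGraph.adjMatrix_mulVec_const_apply (G := G) (α := ℝ) (a := 1) (v := i)
          rw [mul_one] at hcst
          have h3 : (G.adjMatrix ℝ *ᵥ Function.const _ (1:ℝ)) i
              = ∑ k, G.adjMatrix ℝ i k * 1 := rfl
          rw [← hcst, h3, hA]
          exact Finset.sum_congr rfl fun k _ => (mul_one _).symm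
        rw [hAii, zero_add] at h1
        rw [← h1, h2]
      have e1 : ∑ j : ({i}ᶜ : Set (Fin n)), A i j.1 ^ 2
          = (G.degree i : ℝ) := by
        rw [← hdeg]
        exact Finset.sum_congr rfl fun j _ => hsq j.1
      have e2 : ∑ j : ({i}ᶜ : Set (Fin n)), x j.1 ^ 2 = Y := by
        rw [hYdef]
        exact Finset.sum_congr rfl fun j _ => by ring
      rw [e1, e2] at hcs
      exact hcs
    clear_value Y t
    have hc : 0 < ρ - ρi := by linarith
    have hc2 : 0 < (ρ - ρi) ^ 2 := by positivity
    have hd0 : 0 ≤ (G.degree i : ℝ) := Nat.cast_nonneg _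
    have hK0 : 0 < 1 + (G.degree i : ℝ) / (ρ - ρi) ^ 2 := by positivity
    have hsK : 0 < Real.sqrt (1 + (G.degree i : ℝ) / (ρ - ρi) ^ 2) :=
      Real.sqrt_pos.mpr hK0
    rcases eq_or_lt_of_le hY0 with hYz | hYpos
    · -- Y = 0: x i = 1
      have hx1 : x i = 1 := by nlinarith [hx_pos i, hY]
      have hK1 : 1 ≤ 1 + (G.degree i : ℝ) / (ρ - ρi) ^ 2 := by
        have := div_nonneg hd0 hc2.le
        linarith
      have hsK1 : 1 ≤ Real.sqrt (1 + (G.degree i : ℝ) / (ρ - ρi) ^ 2) := by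
        have h8 := Real.sqrt_le_sqrt hK1
        rwa [Real.sqrt_one] at h8
      rw [ge_iff_le, hx1, div_le_one hsK]
      exact hsK1
    · -- Y > 0
      have h4 : (ρ - ρi) ^ 2 * Y ≤ (G.degree i : ℝ) * x i ^ 2 := by
        have h30 : 0 ≤ (ρ - ρi) * Y := mul_nonneg hc.le hY0
        have e1 := mul_self_le_mul_self h30 h3
        have e3 : x i ^ 2 * t ^ 2 ≤ x i ^ 2 * ((G.degree i : ℝ) * Y) :=
          mul_le_mul_of_nonneg_left hCS (sq_nonneg _)
        nlinarith [hYpos, e1, e3]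
      have h5 : (ρ - ρi) ^ 2 * (1 - x i ^ 2) ≤ (G.degree i : ℝ) * x i ^ 2 := by
        rw [hY] at h4; exact h4
      have hK1 : 1 ≤ x i ^ 2 * (1 + (G.degree i : ℝ) / (ρ - ρi) ^ 2) := by
        have h6 : 1 - x i ^ 2 ≤ (G.degree i : ℝ) * x i ^ 2 / (ρ - ρi) ^ 2 := by
          rw [le_div_iff₀ hc2]; nlinarith [h5]
        have e : x i ^ 2 * (1 + (G.degree i : ℝ) / (ρ - ρi) ^ 2)
            = x i ^ 2 + (G.degree i : ℝ) * x i ^ 2 / (ρ - ρi) ^ 2 := by ring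
        linarith
      rw [ge_iff_le, div_le_iff₀ hsK]
      have h7 : 1 ≤ (x i * Real.sqrt (1 + (G.degree i : ℝ) / (ρ - ρi) ^ 2)) ^ 2 := by
        rw [mul_pow, Real.sq_sqrt hK0.le]
        linarith
      nlinarith [h7, mul_pos (hx_pos i) hsK]
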